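/- Let t > 0 and let w : ℝ → ℝ be differentiable on [t, ∞) with w r > 0 for all r ≥ t. Assume that r ↦ r⁻² · (deriv w r)² / (w r) and r ↦ r⁻⁴ · w r are Lebesgue integrable on (t, ∞), and that r⁻³ · w r → 0 as r → ∞. Then (3/4) · ∫_{(t,∞)} r⁻² · (deriv w r)² / (w r) dr ≥ 6 · ∫_{(t,∞)} r⁻⁴ · w r dr − 3 · t⁻³ · w t. -/

import Mathlib

open MeasureTheory Filter

theorem energy_integral_inequality
    (t : ℝ) (ht : 0 < t) (w : ℝ → ℝ)
    (hw : DifferentiableOn ℝ w (Set.Ici t))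
    (hpos : ∀ r ≥ t, 0 < w r)
    (h1 : IntegrableOn (fun r : ℝ => (r ^ 2)⁻¹ * (deriv w r) ^ 2 / w r) (Set.Ioi t))
    (h2 : IntegrableOn (fun r : ℝ => (r ^ 4)⁻¹ * w r) (Set.Ioi t))
    (hdecay : Tendsto (fun r : ℝ => (r ^ 3)⁻¹ * w r) atTop (nhds 0)) :
    (3 / 4) * ∫ r in Set.Ioi t, (r ^ 2)⁻¹ * (deriv w r) ^ 2 / w r ≥
      6 * (∫ r in Set.Ioi t, (r ^ 4)⁻¹ * w r) - 3 * (t ^ 3)⁻¹ * w t := by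
  have hwd : ∀ r ∈ Set.Ioi t, HasDerivAt w (deriv w r) r := by
    intro r hr
    exact ((hw r (Set.mem_Ici.mpr (le_of_lt hr))).differentiableAt (Ici_mem_nhds hr)).hasDerivAt
  -- integrability of r⁻³ * w'
  have h3 : IntegrableOn (fun r : ℝ => (r ^ 3)⁻¹ * deriv w r) (Set.Ioi t) := by
    refine Integrable.mono' ((h1.const_mul (4:ℝ)⁻¹).add h2) ?_ ?_
    · exact (((measurable_id.pow_const 3).inv.mul (measurable_deriv w)).aestronglyMeasurable)
    · rw [ae_restrict_iff' measurableSet_Ioi]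
      filter_upwards with r hr
      simp only [Pi.add_apply]
      have hr0 : (0:ℝ) < r := lt_trans ht hr
      have hu : 0 < w r := hpos r (le_of_lt hr)
      set a := deriv w r
      have habs : ‖(r ^ 3)⁻¹ * a‖ = (r ^ 3)⁻¹ * |a| := by
        rw [Real.norm_eq_abs, abs_mul, abs_of_pos (by positivity)]
      rw [habs]
      have heq : (4:ℝ)⁻¹ * ((r ^ 2)⁻¹ * a ^ 2 / w r) + (r ^ 4)⁻¹ * w r
          = (r ^ 2 * a ^ 2 + 4 * (w r) ^ 2) / (4 * r ^ 4 * w r) := by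
        field_simp
      rw [heq, le_div_iff₀ (by positivity)]
      have hrr : (r ^ 3)⁻¹ * |a| * (4 * r ^ 4 * w r) = 4 * r * |a| * w r := by
        field_simp
      rw [hrr]
      nlinarith [sq_nonneg (r * |a| - 2 * w r), sq_abs a, abs_nonneg a, hu.le, hr0.le,
        mul_pos hr0 hr0]
  -- integration by parts
  have hibp : ∫ r in Set.Ioi t,
      ((-3) * ((r ^ 4)⁻¹ * w r) + (r ^ 3)⁻¹ * deriv w r) = 0 - (t ^ 3)⁻¹ * w t := by
    apply integral_Ioi_of_hasDerivAt_of_tendsto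
    · refine ContinuousWithinAt.mul ?_ ((hw t Set.self_mem_Ici).continuousWithinAt)
      exact ((continuousAt_id.pow 3).inv₀ (pow_ne_zero 3 ht.ne')).continuousWithinAt
    · intro r hr
      have hr0 : (0:ℝ) < r := lt_trans ht hr
      have hne : r ^ 3 ≠ 0 := by positivity
      have h := ((hasDerivAt_pow 3 r).inv hne).mul (hwd r hr)
      convert h using 1
      · rfl
      · rfl
      simp only [Pi.inv_apply]
      field_simp
      ring
    · exact ((h2.const_mul (-3)).add h3)
    · exact hdecay
  have hsplit : ∫ r in Set.Ioi t,
      ((-3) * ((r ^ 4)⁻¹ * w r) + (r ^ 3)⁻¹ * deriv w r)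
      = (-3) * (∫ r in Set.Ioi t, (r ^ 4)⁻¹ * w r)
        + ∫ r in Set.Ioi t, (r ^ 3)⁻¹ * deriv w r := by
    rw [integral_add (h2.const_mul (-3)) h3, integral_const_mul]
  set I1 := ∫ r in Set.Ioi t, (r ^ 2)⁻¹ * (deriv w r) ^ 2 / w r
  set I2 := ∫ r in Set.Ioi t, (r ^ 4)⁻¹ * w r
  set I3 := ∫ r in Set.Ioi t, (r ^ 3)⁻¹ * deriv w r
  have hI3 : I3 = 3 * I2 - (t ^ 3)⁻¹ * w t := by
    rw [hsplit] at hibp; linarith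
  -- pointwise inequality and monotone integral
  have hmono : ∫ r in Set.Ioi t,
      (4 * ((r ^ 3)⁻¹ * deriv w r) - 4 * ((r ^ 4)⁻¹ * w r)) ≤ I1 := by
    apply setIntegral_mono_on ((h3.const_mul 4).sub (h2.const_mul 4)) h1 measurableSet_Ioi
    intro r hr
    have hr0 : (0:ℝ) < r := lt_trans ht hr
    have hu : 0 < w r := hpos r (le_of_lt hr)
    set a := deriv w r
    simp only [Pi.sub_apply]
    rw [← sub_nonneg]
    have heq : (r ^ 2)⁻¹ * a ^ 2 / w r - (4 * ((r ^ 3)⁻¹ * a) - 4 * ((r ^ 4)⁻¹ * w r))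
        = (r * a - 2 * w r) ^ 2 / (r ^ 4 * w r) := by
      field_simp; ring
    rw [heq]; positivity
  have hval : ∫ r in Set.Ioi t,
      (4 * ((r ^ 3)⁻¹ * deriv w r) - 4 * ((r ^ 4)⁻¹ * w r)) = 4 * I3 - 4 * I2 := by
    rw [integral_sub (h3.const_mul 4) (h2.const_mul 4), integral_const_mul, integral_const_mul]
  rw [hval, hI3] at hmono
  linarith
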